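/- Let A be an m×n real matrix with m > n > 1 and full column rank. If the diagonal entries of (AᵀA)⁻¹ are the reciprocals of the corresponding diagonal entries of AᵀA, i.e. ((AᵀA)⁻¹)_{ii} · (AᵀA)_{ii} = 1 for every i, then all off-diagonal entries of AᵀA are zero (AᵀA is diagonal), and consequently (AᵀA)⁻¹ is diagonal as well. -/

import Mathlib

open Matrix

theorem stmt_2 {m n : ℕ} (hmn : n < m) (hn : 1 < n)
    (A : Matrix (Fin m) (Fin n) ℝ) (hrank : A.rank = n)
    (h : ∀ i : Fin n, (Aᵀ * A)⁻¹ i i * (Aᵀ * A) i i = 1) :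
    (Aᵀ * A).IsDiag ∧ ((Aᵀ * A)⁻¹).IsDiag := by
  set G := Aᵀ * A with hGdef
  set B := G⁻¹ with hBdef
  -- A.mulVec is injective
  have hinj : Function.Injective A.mulVec := by
    rw [← Matrix.coe_mulVecLin, ← LinearMap.ker_eq_bot]
    have h1 := A.mulVecLin.finrank_range_add_finrank_ker
    rw [Matrix.rank] at hrank
    rw [hrank] at h1
    simp only [Module.finrank_fintype_fun_eq_card, Fintype.card_fin] at h1
    exact Submodule.finrank_eq_zero.mp (by omega)
  -- definiteness
  have hdef : ∀ x : Fin n → ℝ, x ⬝ᵥ (G *ᵥ x) = 0 → x = 0 := by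
    intro x hx
    have heq : x ⬝ᵥ (G *ᵥ x) = (A *ᵥ x) ⬝ᵥ (A *ᵥ x) := by
      rw [hGdef, ← Matrix.mulVec_mulVec, Matrix.dotProduct_mulVec, Matrix.vecMul_transpose]
    rw [heq] at hx
    have hAx : A *ᵥ x = 0 := by
      funext j
      have hsum := (Finset.sum_eq_zero_iff_of_nonneg
        (fun k _ => mul_self_nonneg ((A *ᵥ x) k))).mp hx j (Finset.mem_univ j)
      exact mul_self_eq_zero.mp hsum
    exact hinj (by rw [hAx, Matrix.mulVec_zero] : A.mulVec x = A.mulVec 0)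
  -- G is a unit
  have hGunit : IsUnit G := by
    apply Matrix.mulVec_injective_iff_isUnit.mp
    intro x y hxy
    have hz : G *ᵥ (x - y) = 0 := by rw [Matrix.mulVec_sub, hxy, sub_self]
    have h0 : (x - y) ⬝ᵥ (G *ᵥ (x - y)) = 0 := by rw [hz, dotProduct_zero]
    exact sub_eq_zero.mp (hdef _ h0)
  have hGB : G * B = 1 := Matrix.mul_nonsing_inv G (hGunit.map Matrix.detMonoidHom)
  have hBG : B * G = 1 := Matrix.nonsing_inv_mul G (hGunit.map Matrix.detMonoidHom)
  -- symmetry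
  have hGsym : Gᵀ = G := by rw [hGdef, Matrix.transpose_mul, Matrix.transpose_transpose]
  have hBsym : Bᵀ = B := by rw [hBdef, Matrix.transpose_nonsing_inv, hGsym]
  have hc0 : ∀ i : Fin n, G i i ≠ 0 := by
    intro i hci
    have := h i
    rw [hci, mul_zero] at this
    exact zero_ne_one this
  -- key: for each i, B *ᵥ e_i = (G i i)⁻¹ • e_i
  have key : ∀ i : Fin n, B *ᵥ Pi.single i 1 = (G i i)⁻¹ • (Pi.single i 1 : Fin n → ℝ) := by
    intro i
    set e : Fin n → ℝ := Pi.single i 1 with he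
    set c : ℝ := G i i with hc
    set v : Fin n → ℝ := e - c • (B *ᵥ e) with hv
    have hGv : G *ᵥ v = G *ᵥ e - c • e := by
      rw [hv, Matrix.mulVec_sub, Matrix.mulVec_smul, Matrix.mulVec_mulVec, hGB,
        Matrix.one_mulVec]
    have hquad : v ⬝ᵥ (G *ᵥ v) = 0 := by
      rw [hGv, hv]
      simp only [sub_dotProduct, dotProduct_sub, smul_dotProduct,
        dotProduct_smul, smul_eq_mul]
      have h1 : e ⬝ᵥ (G *ᵥ e) = c := by
        simp [he, hc, single_dotProduct]
      have h2 : e ⬝ᵥ e = 1 := by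
        rw [he, single_dotProduct, one_mul, Pi.single_eq_same]
      have h3 : (B *ᵥ e) ⬝ᵥ (G *ᵥ e) = 1 := by
        rw [dotProduct_comm, Matrix.dotProduct_mulVec, ← hBsym,
          Matrix.vecMul_transpose, Matrix.mulVec_mulVec, hBG, Matrix.one_mulVec, h2]
      have h4 : (B *ᵥ e) ⬝ᵥ e = B i i := by
        simp [he, dotProduct_single]
      have hB1 : B i i * c = 1 := h i
      rw [h1, h2, h3, h4]
      linear_combination c * hB1
    have hv0 : v = 0 := hdef v hquad
    have he2 : e = c • (B *ᵥ e) := by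
      have := hv0
      rw [hv, sub_eq_zero] at this
      exact this
    calc B *ᵥ e = c⁻¹ • (c • (B *ᵥ e)) := by
          rw [smul_smul, inv_mul_cancel₀ (hc0 i), one_smul]
      _ = c⁻¹ • e := by rw [← he2]
  have hBdiag : B.IsDiag := by
    intro i j hij
    have hk := congrFun (key j) i
    simpa [Matrix.mulVec_single, Pi.single_eq_of_ne hij] using hk
  have hGe : ∀ i : Fin n, G *ᵥ Pi.single i 1 = G i i • (Pi.single i 1 : Fin n → ℝ) := by
    intro i
    have hthis := congrArg (fun w => G *ᵥ w) (key i)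
    rw [Matrix.mulVec_mulVec, hGB, Matrix.one_mulVec, Matrix.mulVec_smul] at hthis
    calc G *ᵥ Pi.single i 1
        = G i i • ((G i i)⁻¹ • (G *ᵥ (Pi.single i 1 : Fin n → ℝ))) := by
          rw [smul_smul, mul_inv_cancel₀ (hc0 i), one_smul]
      _ = G i i • (Pi.single i 1 : Fin n → ℝ) := by rw [← hthis]
  have hGdiag : G.IsDiag := by
    intro i j hij
    have hk := congrFun (hGe j) i
    simpa [Matrix.mulVec_single, Pi.single_eq_of_ne hij] using hk
  exact ⟨hGdiag, hBdiag⟩
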